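/- arXiv:0712.3956 — 4 statements merged into one kernel-verified Lean document; each statement's English description precedes it below -/
import Mathlib

section
/- Every connected α-critical graph with at least 4 vertices has minimum degree at least 2. -/
open SimpleGraph

variable {V : Type*}

/-- The maximum size of an independent (stable) set of a simple graph. -/
noncomputable def alpha (G : SimpleGraph V) : ℕ :=
  sSup {n | ∃ s : Finset V, (∀ x ∈ s, ∀ y ∈ s, ¬ G.Adj x y) ∧ s.card = n}

/-- A graph is α-critical if deleting any edge increases α. -/
def AlphaCritical (G : SimpleGraph V) : Prop :=
  ∀ x y : V, G.Adj x y → alpha G < alpha (G.deleteEdges {s(x, y)})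

/-- `G` contains a totally odd K₄-subdivision: four distinct branch vertices joined by
six internally disjoint paths of odd length. -/
def HasTOK4 (G : SimpleGraph V) : Prop :=
  ∃ b : Fin 4 → V, Function.Injective b ∧
  ∃ P : ∀ i j : Fin 4, G.Walk (b i) (b j),
    (∀ i j, i ≠ j → (P i j).IsPath) ∧
    (∀ i j, i ≠ j → Odd (P i j).length) ∧
    (∀ i j k l : Fin 4, i ≠ j → k ≠ l → s(i, j) ≠ s(k, l) →
      ∀ v : V, v ∈ (P i j).support → v ∈ (P k l).support →
        (v = b i ∨ v = b j) ∧ (v = b k ∨ v = b l))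

/-- `G` is (isomorphic to) a totally odd K₄-subdivision: it has one that uses all
vertices and all edges of `G`. -/
def IsTOK4 (G : SimpleGraph V) : Prop :=
  ∃ b : Fin 4 → V, Function.Injective b ∧
  ∃ P : ∀ i j : Fin 4, G.Walk (b i) (b j),
    (∀ i j, i ≠ j → (P i j).IsPath) ∧
    (∀ i j, i ≠ j → Odd (P i j).length) ∧
    (∀ i j k l : Fin 4, i ≠ j → k ≠ l → s(i, j) ≠ s(k, l) →
      ∀ v : V, v ∈ (P i j).support → v ∈ (P k l).support →
        (v = b i ∨ v = b j) ∧ (v = b k ∨ v = b l)) ∧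
    (∀ v : V, ∃ i j, i ≠ j ∧ v ∈ (P i j).support) ∧
    (∀ e ∈ G.edgeSet, ∃ i j, i ≠ j ∧ e ∈ (P i j).edges)

/-- `G` is an odd cycle: a cycle of odd length passing through all vertices
and using all edges of `G`. -/
def IsOddCycle (G : SimpleGraph V) : Prop :=
  ∃ (v : V) (w : G.Walk v v), w.IsCycle ∧ Odd w.length ∧
    (∀ u : V, u ∈ w.support) ∧ (∀ e ∈ G.edgeSet, e ∈ w.edges)

/-- `G` is isomorphic to the complete graph on one vertex. -/
def IsK1 (G : SimpleGraph V) : Prop := Nonempty (G ≃g (⊤ : SimpleGraph (Fin 1)))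

/-- `G` is isomorphic to the complete graph on two vertices. -/
def IsK2 (G : SimpleGraph V) : Prop := Nonempty (G ≃g (⊤ : SimpleGraph (Fin 2)))

lemma card_le_alpha {V : Type*} [Fintype V] (G : SimpleGraph V) (s : Finset V)
    (hs : ∀ x ∈ s, ∀ y ∈ s, ¬ G.Adj x y) : s.card ≤ alpha G := by
  apply le_csSup
  · exact ⟨Fintype.card V, fun n hn => by obtain ⟨t, -, rfl⟩ := hn; exact t.card_le_univ⟩
  · exact ⟨s, hs, rfl⟩

lemma exists_alpha_set {V : Type*} [Fintype V] (G : SimpleGraph V) :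
    ∃ s : Finset V, (∀ x ∈ s, ∀ y ∈ s, ¬ G.Adj x y) ∧ s.card = alpha G :=
  Nat.sSup_mem
    (s := {n | ∃ s : Finset V, (∀ x ∈ s, ∀ y ∈ s, ¬ G.Adj x y) ∧ s.card = n})
    ⟨0, ∅, by simp, by simp⟩
    ⟨Fintype.card V, fun n hn => by obtain ⟨t, -, rfl⟩ := hn; exact t.card_le_univ⟩

theorem stmt_1 {V : Type*} [Fintype V] (G : SimpleGraph V) (hconn : G.Connected)
    (hG : AlphaCritical G) (hcard : 4 ≤ Fintype.card V) (v : V) :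
    2 ≤ (G.neighborSet v).ncard := by
  classical
  by_contra hlt
  push_neg at hlt
  have hsub : (G.neighborSet v).Subsingleton := fun a ha b hb =>
    (Set.ncard_le_one_iff (G.neighborSet v).toFinite).mp (by omega) ha hb
  -- there is a vertex distinct from any three given vertices
  have hx3 : ∀ a b c : V, ∃ x : V, x ≠ a ∧ x ≠ b ∧ x ≠ c := by
    intro a b c
    by_contra hc
    push_neg at hc
    have hss : (Finset.univ : Finset V) ⊆ {a, b, c} := by
      intro x _
      by_cases h1 : x = a
      · simp [h1]
      by_cases h2 : x = b
      · simp [h2]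
      simp [hc x h1 h2]
    have hle := Finset.card_le_card hss
    have h3 : ({a, b, c} : Finset V).card ≤ 3 := by
      refine (Finset.card_insert_le _ _).trans ?_
      have := Finset.card_insert_le b ({c} : Finset V)
      simp only [Finset.card_singleton] at this
      omega
    simp only [Finset.card_univ] at hle
    omega
  obtain ⟨x, hxv, -, -⟩ := hx3 v v v
  -- v has a neighbor u, which is unique
  obtain ⟨w0⟩ := hconn.preconnected v x
  have hu : ∃ u : V, G.Adj v u := by
    cases w0 with
    | nil => exact absurd rfl hxv
    | cons h1 _ => exact ⟨_, h1⟩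
  obtain ⟨u, huadj⟩ := hu
  have hone : ∀ y : V, G.Adj v y → y = u := fun y hy => hsub hy huadj
  -- a vertex z distinct from v and u
  obtain ⟨z, hzv, hzu, -⟩ := hx3 v u u
  obtain ⟨w1⟩ := hconn.preconnected v z
  obtain ⟨p, hp⟩ := w1.toPath
  -- u has a neighbor w ≠ v
  have hw : ∃ w : V, G.Adj u w ∧ w ≠ v := by
    revert hp
    cases p with
    | nil => exact fun _ => absurd rfl hzv
    | cons h1 q =>
      rename_i b
      intro hp
      have hb : b = u := hone b h1
      subst hb
      cases q with
      | nil => exact absurd rfl hzu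
      | cons h2 r =>
        rename_i w
        refine ⟨w, h2, ?_⟩
        have hnd := hp.support_nodup
        simp only [SimpleGraph.Walk.support_cons, List.nodup_cons] at hnd
        intro hwv
        exact hnd.1 (by simp [hwv.symm, ← SimpleGraph.Walk.support_cons])
  obtain ⟨w, huw, hwv⟩ := hw
  -- the alpha-critical argument
  have hlt' := hG u w huw
  obtain ⟨T, hT, hTc⟩ := exists_alpha_set (G.deleteEdges {s(u, w)})
  have hadjdel : ∀ a b : V, G.Adj a b → s(a, b) ≠ s(u, w) →
      (G.deleteEdges {s(u, w)}).Adj a b := by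
    intro a b hab hne
    rw [SimpleGraph.deleteEdges_adj]
    exact ⟨hab, by simpa using hne⟩
  have huwT : u ∈ T ∧ w ∈ T := by
    by_contra hc
    have hTG : ∀ a ∈ T, ∀ b ∈ T, ¬ G.Adj a b := by
      intro a ha b hb hab
      refine hT a ha b hb (hadjdel a b hab ?_)
      intro he
      rcases Sym2.eq_iff.mp he with ⟨rfl, rfl⟩ | ⟨rfl, rfl⟩
      · exact hc ⟨ha, hb⟩
      · exact hc ⟨hb, ha⟩
    have := card_le_alpha G T hTG
    omega
  obtain ⟨huT, hwT⟩ := huwT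
  have hvT : v ∉ T := by
    intro hvT
    exact hT u huT v hvT (hadjdel u v huadj.symm
      (fun he => hwv (Sym2.congr_right.mp he.symm)))
  set T' : Finset V := insert v (T.erase u) with hT'def
  have hT'G : ∀ a ∈ T', ∀ b ∈ T', ¬ G.Adj a b := by
    intro a ha b hb hab
    rcases Finset.mem_insert.mp ha with ha1 | ha2
    · rcases Finset.mem_insert.mp hb with hb1 | hb2
      · subst ha1; subst hb1; exact G.irrefl hab
      · subst ha1; exact Finset.ne_of_mem_erase hb2 (hone b hab)
    · rcases Finset.mem_insert.mp hb with hb1 | hb2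
      · subst hb1; exact Finset.ne_of_mem_erase ha2 (hone a hab.symm)
      · refine hT a (Finset.mem_of_mem_erase ha2) b (Finset.mem_of_mem_erase hb2)
          (hadjdel a b hab ?_)
        intro he
        rcases Sym2.eq_iff.mp he with ⟨h1, -⟩ | ⟨-, h2⟩
        · exact Finset.ne_of_mem_erase ha2 h1
        · exact Finset.ne_of_mem_erase hb2 h2
  have hcardT' : T'.card = T.card := by
    rw [hT'def, Finset.card_insert_of_notMem (fun h => hvT (Finset.mem_of_mem_erase h)),
      Finset.card_erase_of_mem huT]
    have : 1 ≤ T.card := Finset.card_pos.mpr ⟨u, huT⟩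
    omega
  have := card_le_alpha G T' hT'G
  omega
end

section
/- Let G be an α-critical graph, u a vertex of G, and e an edge of G not incident to u such that one endpoint of e is adjacent to u. Then e is a critical edge of G − u and there is a maximum stable set of G − e avoiding u. -/
open SimpleGraph

variable {V : Type*}

lemma alpha_bdd [Fintype V] (G : SimpleGraph V) :
    BddAbove {n | ∃ s : Finset V, (∀ x ∈ s, ∀ y ∈ s, ¬ G.Adj x y) ∧ s.card = n} := by
  refine ⟨Fintype.card V, ?_⟩
  rintro n ⟨s, -, rfl⟩
  exact Finset.card_le_univ s

lemma le_alpha [Fintype V] (G : SimpleGraph V) (s : Finset V)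
    (hs : ∀ x ∈ s, ∀ y ∈ s, ¬ G.Adj x y) : s.card ≤ alpha G :=
  le_csSup (alpha_bdd G) ⟨s, hs, rfl⟩

lemma alpha_spec [Fintype V] (G : SimpleGraph V) :
    ∃ s : Finset V, (∀ x ∈ s, ∀ y ∈ s, ¬ G.Adj x y) ∧ s.card = alpha G := by
  have hne : {n | ∃ s : Finset V, (∀ x ∈ s, ∀ y ∈ s, ¬ G.Adj x y) ∧ s.card = n}.Nonempty :=
    ⟨0, ∅, by simp, rfl⟩
  have := Nat.sSup_mem hne (alpha_bdd G)
  exact this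

theorem stmt_10 {V : Type*} [Fintype V] (G : SimpleGraph V) (hG : AlphaCritical G)
    (u x y : V) (hxy : G.Adj x y) (hxu : x ≠ u) (hyu : y ≠ u) (hux : G.Adj u x) :
    alpha (G.induce {v | v ≠ u}) <
      alpha ((G.induce {v | v ≠ u}).deleteEdges {s((⟨x, hxu⟩ : {v // v ≠ u}), ⟨y, hyu⟩)}) ∧
    ∃ S : Finset V, (∀ a ∈ S, ∀ b ∈ S, ¬ (G.deleteEdges {s(x, y)}).Adj a b) ∧
      S.card = alpha (G.deleteEdges {s(x, y)}) ∧ u ∉ S := by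
  classical
  have hcrit := hG x y hxy
  obtain ⟨S, hSstab, hScard⟩ := alpha_spec (G.deleteEdges {s(x, y)})
  have hxyS : x ∈ S ∧ y ∈ S := by
    by_contra h
    have hstabG : ∀ a ∈ S, ∀ b ∈ S, ¬ G.Adj a b := by
      intro a ha b hb hab
      apply hSstab a ha b hb
      rw [deleteEdges_adj]
      refine ⟨hab, ?_⟩
      simp only [Set.mem_singleton_iff, Sym2.eq_iff]
      rintro (⟨rfl, rfl⟩ | ⟨rfl, rfl⟩)
      · exact h ⟨ha, hb⟩
      · exact h ⟨hb, ha⟩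
    have := le_alpha G S hstabG
    omega
  obtain ⟨hxS, hyS⟩ := hxyS
  have huS : u ∉ S := by
    intro huS
    apply hSstab u huS x hxS
    rw [deleteEdges_adj]
    refine ⟨hux, ?_⟩
    simp only [Set.mem_singleton_iff, Sym2.eq_iff]
    rintro (⟨h1, h2⟩ | ⟨h1, h2⟩)
    · exact hux.ne h1
    · exact hyu h1.symm
  refine ⟨?_, S, hSstab, hScard, huS⟩
  haveI : Fintype ({v | v ≠ u} : Set V) := (Set.toFinite _).fintype
  -- alpha of induced ≤ alpha G
  obtain ⟨T, hT, hTcard⟩ := alpha_spec (G.induce {v | v ≠ u})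
  have h1 : alpha (G.induce {v | v ≠ u}) ≤ alpha G := by
    rw [← hTcard]
    have hmap : (T.map ⟨Subtype.val, Subtype.val_injective⟩).card = T.card :=
      Finset.card_map _
    rw [← hmap]
    apply le_alpha
    intro a ha b hb hab
    simp only [Finset.mem_map, Function.Embedding.coeFn_mk] at ha hb
    obtain ⟨⟨a', ha'u⟩, ha', rfl⟩ := ha
    obtain ⟨⟨b', hb'u⟩, hb', rfl⟩ := hb
    exact hT _ ha' _ hb' hab
  -- lift S to the subtype
  have hall : ∀ v ∈ S, v ≠ u := fun v hv h => huS (h ▸ hv)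
  set S' : Finset {v // v ≠ u} := S.subtype (· ≠ u) with hS'
  have hS'card : S'.card = S.card := by
    rw [hS', Finset.card_subtype, Finset.filter_true_of_mem hall]
  have hS'stab : ∀ a ∈ S', ∀ b ∈ S',
      ¬ ((G.induce {v | v ≠ u}).deleteEdges
        {s((⟨x, hxu⟩ : {v // v ≠ u}), ⟨y, hyu⟩)}).Adj a b := by
    rintro ⟨a, hau⟩ ha ⟨b, hbu⟩ hb hadj
    rw [deleteEdges_adj] at hadj
    obtain ⟨hadj1, hadj2⟩ := hadj
    simp only [hS', Finset.mem_subtype] at ha hb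
    have hGab : G.Adj a b := by simpa using hadj1
    apply hSstab a ha b hb
    rw [deleteEdges_adj]
    refine ⟨hGab, ?_⟩
    simp only [Set.mem_singleton_iff, Sym2.eq_iff]
    rintro (⟨rfl, rfl⟩ | ⟨rfl, rfl⟩)
    · exact hadj2 rfl
    · exact hadj2 Sym2.eq_swap
  calc alpha (G.induce {v | v ≠ u}) ≤ alpha G := h1
    _ < alpha (G.deleteEdges {s(x, y)}) := hcrit
    _ = S.card := hScard.symm
    _ = S'.card := hS'card.symm
    _ ≤ _ := le_alpha _ S' hS'stab
end

section
/- Every connected cubic triangle-free graph with no subgraph isomorphic to K_{2,3}, in which every two incident edges lie on a common cycle of length 4, is isomorphic to the graph of the cube Q₃. -/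
open SimpleGraph

variable {V : Type*}

/-- The 3-dimensional hypercube graph: vertices are triples of bits, adjacent iff
they differ in exactly one coordinate. -/
def Q3 : SimpleGraph (Fin 3 → Bool) :=
  SimpleGraph.fromRel (fun a b => ∃! i : Fin 3, a i ≠ b i)

private lemma nbr_iff {V : Type*} [Fintype V] {G : SimpleGraph V} {v a b c : V}
    (h3 : (G.neighborSet v).ncard = 3) (hab : a ≠ b) (hac : a ≠ c) (hbc : b ≠ c)
    (ha : G.Adj v a) (hb : G.Adj v b) (hc : G.Adj v c) :
    ∀ x, G.Adj v x ↔ x = a ∨ x = b ∨ x = c := by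
  have hsub : ({a, b, c} : Set V) ⊆ G.neighborSet v := by
    intro x hx
    simp only [Set.mem_insert_iff, Set.mem_singleton_iff] at hx
    rcases hx with rfl | rfl | rfl <;> assumption
  have hcard : ({a, b, c} : Set V).ncard = 3 :=
    Set.ncard_eq_three.2 ⟨a, b, c, hab, hac, hbc, rfl⟩
  have heq := Set.eq_of_subset_of_ncard_le hsub (by rw [h3, hcard]) (Set.toFinite _)
  intro x
  rw [← SimpleGraph.mem_neighborSet, ← heq]
  simp

private lemma tf_nadj {V : Type*} {G : SimpleGraph V} (htf : G.CliqueFree 3)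
    {v a b : V} (h1 : G.Adj v a) (h2 : G.Adj v b) : ¬ G.Adj a b := by
  classical
  intro h
  exact htf {v, a, b} (SimpleGraph.is3Clique_triple_iff.2 ⟨h1, h2, h⟩)

private lemma no_k23 {V : Type*} {G : SimpleGraph V}
    (hK23 : ¬ ∃ (a : Fin 2 → V) (b : Fin 3 → V),
      Function.Injective a ∧ Function.Injective b ∧
      (∀ i j, a i ≠ b j) ∧ (∀ i j, G.Adj (a i) (b j)))
    {u v a b c : V} (huv : u ≠ v) (hab : a ≠ b) (hac : a ≠ c) (hbc : b ≠ c)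
    (hua : u ≠ a) (hub : u ≠ b) (huc : u ≠ c)
    (hva : v ≠ a) (hvb : v ≠ b) (hvc : v ≠ c)
    (h1 : G.Adj u a) (h2 : G.Adj u b) (h3 : G.Adj u c)
    (h4 : G.Adj v a) (h5 : G.Adj v b) (h6 : G.Adj v c) : False := by
  apply hK23
  refine ⟨![u, v], ![a, b, c], ?_, ?_, ?_, ?_⟩
  · intro i j h
    fin_cases i <;> fin_cases j <;> simp at h ⊢ <;>
      first | exact huv h | exact huv h.symm
  · intro i j h
    fin_cases i <;> fin_cases j <;> simp at h ⊢ <;>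
      first | exact hab h | exact hab h.symm | exact hac h | exact hac h.symm
            | exact hbc h | exact hbc h.symm
  · intro i j
    fin_cases i <;> fin_cases j <;> simp <;> assumption
  · intro i j
    fin_cases i <;> fin_cases j <;> simp <;> assumption

private lemma q3_adj_lit (b0 b1 b2 c0 c1 c2 : Bool) :
    Q3.Adj ![b0,b1,b2] ![c0,c1,c2] ↔
      ((b0 ≠ c0 ∧ b1 = c1 ∧ b2 = c2) ∨ (b0 = c0 ∧ b1 ≠ c1 ∧ b2 = c2) ∨
       (b0 = c0 ∧ b1 = c1 ∧ b2 ≠ c2)) := by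
  rw [Q3, SimpleGraph.fromRel_adj]
  simp only [ExistsUnique, ne_eq, funext_iff]
  cases b0 <;> cases b1 <;> cases b2 <;> cases c0 <;> cases c1 <;> cases c2 <;> decide

private def cubeMap {V : Type*} (v0 a b c p q r w : V) : (Fin 3 → Bool) → V := fun x =>
  if x 0 then (if x 1 then (if x 2 then w else p) else (if x 2 then q else a))
  else (if x 1 then (if x 2 then r else b) else (if x 2 then c else v0))

private def cubeInv {V : Type*} [DecidableEq V] (v0 a b c p q r : V) : V → (Fin 3 → Bool) :=
  fun u =>
  if u = v0 then ![false,false,false] else if u = a then ![true,false,false]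
  else if u = b then ![false,true,false] else if u = c then ![false,false,true]
  else if u = p then ![true,true,false] else if u = q then ![true,false,true]
  else if u = r then ![false,true,true] else ![true,true,true]
set_option maxHeartbeats 1000000 in
theorem stmt_14 {V : Type*} [Fintype V] (G : SimpleGraph V) (hconn : G.Connected)
    (hcubic : ∀ v : V, (G.neighborSet v).ncard = 3)
    (htf : G.CliqueFree 3)
    (hK23 : ¬ ∃ (a : Fin 2 → V) (b : Fin 3 → V),
      Function.Injective a ∧ Function.Injective b ∧
      (∀ i j, a i ≠ b j) ∧ (∀ i j, G.Adj (a i) (b j)))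
    (hC4 : ∀ u v w : V, G.Adj u v → G.Adj v w → u ≠ w →
      ∃ z : V, z ≠ v ∧ G.Adj u z ∧ G.Adj z w) :
    Nonempty (G ≃g Q3) := by
  classical
  obtain ⟨v0⟩ := hconn.nonempty
  obtain ⟨a, b, c, hab, hac, hbc, hN0⟩ := Set.ncard_eq_three.1 (hcubic v0)
  have hv0a : G.Adj v0 a := by rw [← SimpleGraph.mem_neighborSet, hN0]; simp
  have hv0b : G.Adj v0 b := by rw [← SimpleGraph.mem_neighborSet, hN0]; simp
  have hv0c : G.Adj v0 c := by rw [← SimpleGraph.mem_neighborSet, hN0]; simp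
  have hnab : ¬ G.Adj a b := tf_nadj htf hv0a hv0b
  have hnac : ¬ G.Adj a c := tf_nadj htf hv0a hv0c
  have hnbc : ¬ G.Adj b c := tf_nadj htf hv0b hv0c
  obtain ⟨p, hpv0, hap, hpb⟩ := hC4 a v0 b hv0a.symm hv0b hab
  obtain ⟨q, hqv0, haq, hqc⟩ := hC4 a v0 c hv0a.symm hv0c hac
  obtain ⟨r, hrv0, hbr, hrc⟩ := hC4 b v0 c hv0b.symm hv0c hbc
  -- basic distinctness
  have nv0a : v0 ≠ a := hv0a.ne
  have nv0b : v0 ≠ b := hv0b.ne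
  have nv0c : v0 ≠ c := hv0c.ne
  have nv0p : v0 ≠ p := hpv0.symm
  have nv0q : v0 ≠ q := hqv0.symm
  have nv0r : v0 ≠ r := hrv0.symm
  have nap : a ≠ p := hap.ne
  have naq : a ≠ q := haq.ne
  have nbp : b ≠ p := hpb.ne'
  have nbr : b ≠ r := hbr.ne
  have ncq : c ≠ q := hqc.ne'
  have ncr : c ≠ r := hrc.ne'
  have npc : p ≠ c := fun h => hnac (h ▸ hap)
  have nqb : q ≠ b := fun h => hnab (h ▸ haq)
  have nra : r ≠ a := fun h => hnab ((h ▸ hbr).symm)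
  have npq : p ≠ q := by
    intro h; subst h
    exact no_k23 hK23 nv0p hab hac hbc nv0a nv0b nv0c nap.symm nbp.symm npc
      hv0a hv0b hv0c hap.symm hpb hqc
  have npr : p ≠ r := by
    intro h; subst h
    exact no_k23 hK23 nv0p hab hac hbc nv0a nv0b nv0c nap.symm nbp.symm npc
      hv0a hv0b hv0c hap.symm hpb hrc
  have nqr : q ≠ r := by
    intro h; subst h
    exact no_k23 hK23 nv0q hab hac hbc nv0a nv0b nv0c naq.symm nqb ncq.symm
      hv0a hv0b hv0c haq.symm hbr.symm hqc
  -- neighbor characterizations for v0, a, b, c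
  have hAdjv0 := nbr_iff (hcubic v0) hab hac hbc hv0a hv0b hv0c
  have hAdja := nbr_iff (hcubic a) nv0p nv0q npq hv0a.symm hap haq
  have hAdjb := nbr_iff (hcubic b) nv0p nv0r npr hv0b.symm hpb.symm hbr
  have hAdjc := nbr_iff (hcubic c) nv0q nv0r nqr hv0c.symm hqc.symm hrc.symm
  -- the eighth vertex
  obtain ⟨w, hwa, hpw, hwq⟩ := hC4 p a q hap.symm haq npq
  have npw : p ≠ w := hpw.ne
  have nqw : q ≠ w := hwq.ne'
  have naw : a ≠ w := hwa.symm
  have nv0w : v0 ≠ w := by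
    intro h
    have hadj : G.Adj v0 p := by rw [h]; exact hpw.symm
    rcases (hAdjv0 p).1 hadj with h' | h' | h'
    exacts [nap h'.symm, nbp h'.symm, npc h']
  have nbw : b ≠ w := by
    intro h
    have hadj : G.Adj b q := by rw [h]; exact hwq
    rcases (hAdjb q).1 hadj with h' | h' | h'
    exacts [nv0q h'.symm, npq h'.symm, nqr h']
  have ncw : c ≠ w := by
    intro h
    have hadj : G.Adj c p := by rw [h]; exact hpw.symm
    rcases (hAdjc p).1 hadj with h' | h' | h'
    exacts [nv0p h'.symm, npq h', npr h']
  have nrw : r ≠ w := by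
    intro h
    have hadj1 : G.Adj r p := by rw [h]; exact hpw.symm
    have hadj2 : G.Adj r q := by rw [h]; exact hwq
    have hAdjr' := nbr_iff (hcubic r) hbc nbp npc.symm hbr.symm hrc hadj1
    rcases (hAdjr' q).1 hadj2 with h' | h' | h'
    exacts [nqb h', ncq h'.symm, npq h'.symm]
  -- r is adjacent to w
  have hrw : G.Adj r w := by
    obtain ⟨z, hzp, hbz, hzw⟩ := hC4 b p w hpb.symm hpw nbw
    rcases (hAdjb z).1 hbz with rfl | rfl | rfl
    · exact absurd ((hAdjv0 w).1 hzw) (by push_neg; exact ⟨naw.symm, nbw.symm, ncw.symm⟩)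
    · exact absurd rfl hzp
    · exact hzw
  -- remaining neighbor characterizations
  have hAdjp := nbr_iff (hcubic p) hab naw nbw hap.symm hpb hpw
  have hAdjq := nbr_iff (hcubic q) hac naw ncw haq.symm hqc hwq.symm
  have hAdjr := nbr_iff (hcubic r) hbc nbw ncw hbr.symm hrc hrw
  have hAdjw := nbr_iff (hcubic w) npq npr nqr hpw.symm hwq hrw.symm
  -- every vertex is one of the eight
  have hS : ∀ u : V,
      u = v0 ∨ u = a ∨ u = b ∨ u = c ∨ u = p ∨ u = q ∨ u = r ∨ u = w := by
    have key : ∀ (s t : V), G.Walk s t →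
        (t = v0 ∨ t = a ∨ t = b ∨ t = c ∨ t = p ∨ t = q ∨ t = r ∨ t = w) →
        (s = v0 ∨ s = a ∨ s = b ∨ s = c ∨ s = p ∨ s = q ∨ s = r ∨ s = w) := by
      intro s t wlk
      induction wlk with
      | nil => exact id
      | @cons u x t' h pw ih =>
        intro ht
        rcases ih ht with rfl | rfl | rfl | rfl | rfl | rfl | rfl | rfl
        · rcases (hAdjv0 u).1 h.symm with rfl | rfl | rfl <;> simp
        · rcases (hAdja u).1 h.symm with rfl | rfl | rfl <;> simp
        · rcases (hAdjb u).1 h.symm with rfl | rfl | rfl <;> simp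
        · rcases (hAdjc u).1 h.symm with rfl | rfl | rfl <;> simp
        · rcases (hAdjp u).1 h.symm with rfl | rfl | rfl <;> simp
        · rcases (hAdjq u).1 h.symm with rfl | rfl | rfl <;> simp
        · rcases (hAdjr u).1 h.symm with rfl | rfl | rfl <;> simp
        · rcases (hAdjw u).1 h.symm with rfl | rfl | rfl <;> simp
    intro u
    obtain ⟨wlk⟩ := hconn.preconnected u v0
    exact key u v0 wlk (Or.inl rfl)
  -- build the isomorphism
  have hgf : Function.LeftInverse (cubeInv v0 a b c p q r) (cubeMap v0 a b c p q r w) := by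
    intro x
    have hx : x = ![x 0, x 1, x 2] := funext fun i => by fin_cases i <;> rfl
    rw [hx]
    cases hx0 : x 0 <;> cases hx1 : x 1 <;> cases hx2 : x 2 <;>
      simp [cubeMap, cubeInv, hx0, hx1, hx2, nv0a, nv0b, nv0c, nv0p, nv0q, nv0r, nv0w,
        hab, hac, hbc, nap, naq, nra.symm, naw, nbp, nqb.symm, nbr, nbw, npc.symm, ncq,
        ncr, ncw, npq, npr, npw, nqr, nqw, nrw,
        nv0a.symm, nv0b.symm, nv0c.symm, nv0p.symm, nv0q.symm, nv0r.symm, nv0w.symm,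
        hab.symm, hac.symm, hbc.symm, nap.symm, naq.symm, nra, naw.symm, nbp.symm, nqb,
        nbr.symm, nbw.symm, npc, ncq.symm, ncr.symm, ncw.symm, npq.symm, npr.symm,
        npw.symm, nqr.symm, nqw.symm, nrw.symm]
  have hfg : Function.RightInverse (cubeInv v0 a b c p q r) (cubeMap v0 a b c p q r w) := by
    intro u
    rcases hS u with rfl | rfl | rfl | rfl | rfl | rfl | rfl | rfl <;>
      simp [cubeMap, cubeInv, nv0a, nv0b, nv0c, nv0p, nv0q, nv0r, nv0w,
        hab, hac, hbc, nap, naq, nra.symm, naw, nbp, nqb.symm, nbr, nbw, npc.symm, ncq,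
        ncr, ncw, npq, npr, npw, nqr, nqw, nrw,
        nv0a.symm, nv0b.symm, nv0c.symm, nv0p.symm, nv0q.symm, nv0r.symm, nv0w.symm,
        hab.symm, hac.symm, hbc.symm, nap.symm, naq.symm, nra, naw.symm, nbp.symm, nqb,
        nbr.symm, nbw.symm, npc, ncq.symm, ncr.symm, ncw.symm, npq.symm, npr.symm,
        npw.symm, nqr.symm, nqw.symm, nrw.symm]
  have hmap : ∀ x y, G.Adj (cubeMap v0 a b c p q r w x) (cubeMap v0 a b c p q r w y) ↔ Q3.Adj x y := by
    intro x y
    have hx : x = ![x 0, x 1, x 2] := funext fun i => by fin_cases i <;> rfl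
    have hy : y = ![y 0, y 1, y 2] := funext fun i => by fin_cases i <;> rfl
    rw [hx, hy, q3_adj_lit]
    cases hx0 : x 0 <;> cases hx1 : x 1 <;> cases hx2 : x 2 <;>
      cases hy0 : y 0 <;> cases hy1 : y 1 <;> cases hy2 : y 2 <;>
      simp [cubeMap, hx0, hx1, hx2, hy0, hy1, hy2,
        hAdjv0, hAdja, hAdjb, hAdjc, hAdjp, hAdjq, hAdjr, hAdjw,
        nv0a, nv0b, nv0c, nv0p, nv0q, nv0r, nv0w,
        hab, hac, hbc, nap, naq, nra.symm, naw, nbp, nqb.symm, nbr, nbw, npc.symm, ncq,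
        ncr, ncw, npq, npr, npw, nqr, nqw, nrw,
        nv0a.symm, nv0b.symm, nv0c.symm, nv0p.symm, nv0q.symm, nv0r.symm, nv0w.symm,
        hab.symm, hac.symm, hbc.symm, nap.symm, naq.symm, nra, naw.symm, nbp.symm, nqb,
        nbr.symm, nbw.symm, npc, ncq.symm, ncr.symm, ncw.symm, npq.symm, npr.symm,
        npw.symm, nqr.symm, nqw.symm, nrw.symm]
  exact ⟨(RelIso.symm ⟨⟨cubeMap v0 a b c p q r w, cubeInv v0 a b c p q r, hgf, hfg⟩,
    hmap _ _⟩ : G ≃g Q3)⟩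
end

section
/- Let G be a graph with a vertex x whose neighborhood includes three consecutive vertices of an induced subgraph that is an odd cycle C covering all vertices of G except x, with deg(x) = 3 in G. Then G contains (indeed, is) a totally odd K₄-subdivision. -/
open SimpleGraph

variable {V : Type*}

set_option linter.unnecessarySeqFocus false


namespace TOK4Aux
variable {V : Type*} {G : SimpleGraph V}

open SimpleGraph.Walk

lemma support_eq_map {u v : V} (p : G.Walk u v) :
    p.support = (List.range (p.length + 1)).map p.getVert := by
  induction p with
  | nil => simp [Walk.getVert]
  | cons h q ih =>
      rw [Walk.support_cons, ih, Walk.length_cons]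
      conv_rhs => rw [List.range_succ_eq_map]
      rw [List.map_cons, List.map_map, Walk.getVert_zero]
      congr 1

lemma edges_eq_map {u v : V} (p : G.Walk u v) :
    p.edges = (List.range p.length).map (fun k => s(p.getVert k, p.getVert (k + 1))) := by
  induction p with
  | nil => simp
  | cons h q ih =>
      rw [Walk.edges_cons, ih, Walk.length_cons, List.range_succ_eq_map]
      simp [List.map_map, Function.comp, Walk.getVert_cons_succ]

lemma length_drop {u v : V} (p : G.Walk u v) (n : ℕ) :
    (p.drop n).length = p.length - n := by
  induction p generalizing n with
  | nil => simp [Walk.drop]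
  | cons h q ih =>
      cases n with
      | zero => simp [Walk.drop]
      | succ n => simp [Walk.drop, ih]

lemma getVert_drop {u v : V} (p : G.Walk u v) (n k : ℕ) :
    (p.drop n).getVert k = p.getVert (n + k) := by
  induction p generalizing n with
  | nil => simp [Walk.drop, Walk.getVert]
  | cons h q ih =>
      cases n with
      | zero => simp [Walk.drop]
      | succ n =>
          simp only [Walk.drop, Walk.getVert_copy]
          exact (ih n).trans (by rw [show n + 1 + k = (n + k) + 1 by omega, Walk.getVert_cons_succ])

/-- Take the first `n` darts of a walk. -/
def wtake {u v : V} : (p : G.Walk u v) → (n : ℕ) → G.Walk u (p.getVert n)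
  | Walk.nil, _ => Walk.nil
  | Walk.cons h q, 0 => Walk.nil.copy rfl (Walk.getVert_zero (Walk.cons h q)).symm
  | Walk.cons h q, (n + 1) =>
      (Walk.cons h (wtake q n)).copy rfl (Walk.getVert_cons_succ _ h).symm

lemma length_wtake {u v : V} (p : G.Walk u v) (n : ℕ) (hn : n ≤ p.length) :
    (wtake p n).length = n := by
  induction p generalizing n with
  | nil => simp at hn; simp [hn, wtake]
  | cons h q ih =>
      cases n with
      | zero => simp [wtake]
      | succ n =>
          simp only [wtake, Walk.length_copy, Walk.length_cons]
          rw [ih]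
          simpa using hn

lemma getVert_wtake {u v : V} (p : G.Walk u v) (n k : ℕ) (hk : k ≤ n) :
    (wtake p n).getVert k = p.getVert k := by
  induction p generalizing n k with
  | nil => simp [wtake, Walk.getVert]
  | cons h q ih =>
      cases n with
      | zero =>
          interval_cases k
          simp [wtake]
      | succ n =>
          cases k with
          | zero => simp [wtake]
          | succ k =>
              simp only [wtake, Walk.getVert_copy, Walk.getVert_cons_succ]
              exact ih n k (by omega)

lemma wtake_append_drop {u v : V} (p : G.Walk u v) (n : ℕ) :
    (wtake p n).append (p.drop n) = p := by
  induction p generalizing n with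
  | nil => simp [wtake, Walk.drop]
  | cons h q ih =>
      cases n with
      | zero => simp [wtake, Walk.drop]
      | succ n =>
          simp only [wtake, Walk.drop, Walk.append_copy_copy, Walk.copy_rfl_rfl,
            Walk.cons_append, ih]
          show (Walk.cons h (wtake q n)).append (q.drop n) = _
          rw [Walk.cons_append, ih]

end TOK4Aux

namespace TOK4Aux

def bb4 {V : Type*} (x a b c : V) : Fin 4 → V
  | 0 => x | 1 => a | 2 => b | 3 => c

def P6 {V : Type*} {G : SimpleGraph V} {x a b c : V}
    (hxa : G.Adj x a) (hxb : G.Adj x b) (hxc : G.Adj x c)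
    (hab : G.Adj a b) (hbc : G.Adj b c) (g : G.Walk c a) :
    ∀ i j : Fin 4, G.Walk (bb4 x a b c i) (bb4 x a b c j)
  | 0, 0 => Walk.nil
  | 0, 1 => Walk.cons hxa Walk.nil
  | 0, 2 => Walk.cons hxb Walk.nil
  | 0, 3 => Walk.cons hxc Walk.nil
  | 1, 0 => (Walk.cons hxa Walk.nil).reverse
  | 1, 1 => Walk.nil
  | 1, 2 => Walk.cons hab Walk.nil
  | 1, 3 => g.reverse
  | 2, 0 => (Walk.cons hxb Walk.nil).reverse
  | 2, 1 => (Walk.cons hab Walk.nil).reverse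
  | 2, 2 => Walk.nil
  | 2, 3 => Walk.cons hbc Walk.nil
  | 3, 0 => (Walk.cons hxc Walk.nil).reverse
  | 3, 1 => g
  | 3, 2 => (Walk.cons hbc Walk.nil).reverse
  | 3, 3 => Walk.nil


section
variable {V : Type*} {G : SimpleGraph V} {x a b c : V}
  (hxa : G.Adj x a) (hxb : G.Adj x b) (hxc : G.Adj x c)
  (hab : G.Adj a b) (hbc : G.Adj b c) (g : G.Walk c a)

@[simp] lemma bb4_0 : bb4 x a b c 0 = x := rfl
@[simp] lemma bb4_1 : bb4 x a b c 1 = a := rfl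
@[simp] lemma bb4_2 : bb4 x a b c 2 = b := rfl
@[simp] lemma bb4_3 : bb4 x a b c 3 = c := rfl
@[simp] lemma P6_00 : P6 hxa hxb hxc hab hbc g 0 0 = Walk.nil := rfl
@[simp] lemma P6_01 : P6 hxa hxb hxc hab hbc g 0 1 = Walk.cons hxa Walk.nil := rfl
@[simp] lemma P6_02 : P6 hxa hxb hxc hab hbc g 0 2 = Walk.cons hxb Walk.nil := rfl
@[simp] lemma P6_03 : P6 hxa hxb hxc hab hbc g 0 3 = Walk.cons hxc Walk.nil := rfl
@[simp] lemma P6_10 : P6 hxa hxb hxc hab hbc g 1 0 = (Walk.cons hxa Walk.nil).reverse := rfl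
@[simp] lemma P6_11 : P6 hxa hxb hxc hab hbc g 1 1 = Walk.nil := rfl
@[simp] lemma P6_12 : P6 hxa hxb hxc hab hbc g 1 2 = Walk.cons hab Walk.nil := rfl
@[simp] lemma P6_13 : P6 hxa hxb hxc hab hbc g 1 3 = g.reverse := rfl
@[simp] lemma P6_20 : P6 hxa hxb hxc hab hbc g 2 0 = (Walk.cons hxb Walk.nil).reverse := rfl
@[simp] lemma P6_21 : P6 hxa hxb hxc hab hbc g 2 1 = (Walk.cons hab Walk.nil).reverse := rfl
@[simp] lemma P6_22 : P6 hxa hxb hxc hab hbc g 2 2 = Walk.nil := rfl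
@[simp] lemma P6_23 : P6 hxa hxb hxc hab hbc g 2 3 = Walk.cons hbc Walk.nil := rfl
@[simp] lemma P6_30 : P6 hxa hxb hxc hab hbc g 3 0 = (Walk.cons hxc Walk.nil).reverse := rfl
@[simp] lemma P6_31 : P6 hxa hxb hxc hab hbc g 3 1 = g := rfl
@[simp] lemma P6_32 : P6 hxa hxb hxc hab hbc g 3 2 = (Walk.cons hbc Walk.nil).reverse := rfl
@[simp] lemma P6_33 : P6 hxa hxb hxc hab hbc g 3 3 = Walk.nil := rfl

end

end TOK4Aux

namespace TOK4Aux

theorem buildTOK4 {V : Type*} {G : SimpleGraph V} {x a b c : V}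
    (hxa : G.Adj x a) (hxb : G.Adj x b) (hxc : G.Adj x c)
    (hab : G.Adj a b) (hbc : G.Adj b c)
    (nab : a ≠ b) (nac : a ≠ c) (nbc : b ≠ c)
    (nxa : x ≠ a) (nxb : x ≠ b) (nxc : x ≠ c)
    (g : G.Walk c a) (hgp : g.IsPath) (hgodd : Odd g.length)
    (hgx : x ∉ g.support) (hgb : b ∉ g.support)
    (hcov : ∀ u : V, u = x ∨ u = b ∨ u ∈ g.support)
    (hecov : ∀ e ∈ G.edgeSet,
      e = s(x, a) ∨ e = s(x, b) ∨ e = s(x, c) ∨ e = s(a, b) ∨ e = s(b, c) ∨ e ∈ g.edges) :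
    IsTOK4 G := by
  refine ⟨bb4 x a b c, ?_, P6 hxa hxb hxc hab hbc g, ?_, ?_, ?_, ?_, ?_⟩
  · -- injective
    intro i j h
    fin_cases i <;> fin_cases j <;>
      simp only [bb4_0, bb4_1, bb4_2, bb4_3] at h <;>
      first
        | rfl
        | exact absurd h nxa | exact absurd h nxb | exact absurd h nxc
        | exact absurd h nab | exact absurd h nac | exact absurd h nbc
        | exact absurd h.symm nxa | exact absurd h.symm nxb | exact absurd h.symm nxc
        | exact absurd h.symm nab | exact absurd h.symm nac | exact absurd h.symm nbc
  · -- paths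
    intro i j hij
    fin_cases i <;> fin_cases j <;>
      first
        | exact absurd rfl hij
        | simp [Walk.cons_isPath_iff, nxa, nxb, nxc, nab, nbc, hgp, hgp.reverse,
            Walk.isPath_reverse_iff, Ne.symm]
  · -- odd
    intro i j hij
    fin_cases i <;> fin_cases j <;>
      first
        | exact absurd rfl hij
        | simp [hgodd]
  · -- disjointness
    have hg4 : ∀ u : V, u ∈ g.support → u = x ∨ u = a ∨ u = b ∨ u = c → u = a ∨ u = c := by
      intro u hu h
      rcases h with h | h | h | h
      · exact absurd (h ▸ hu) hgx
      · exact Or.inl h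
      · exact absurd (h ▸ hu) hgb
      · exact Or.inr h
    have hsupE : ∀ i j : Fin 4, s(i, j) ≠ s((1 : Fin 4), (3 : Fin 4)) →
        ∀ u : V, u ∈ ((P6 hxa hxb hxc hab hbc g) i j).support →
          u = bb4 x a b c i ∨ u = bb4 x a b c j := by
      intro i j hne u hu
      fin_cases i <;> fin_cases j <;>
        first
          | exact absurd rfl hne
          | exact absurd Sym2.eq_swap hne
          | (simp [Walk.support_reverse] at hu ⊢ <;> tauto)
    have hmemg : ∀ i j : Fin 4, s(i, j) = s((1 : Fin 4), (3 : Fin 4)) →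
        ∀ u : V, u ∈ ((P6 hxa hxb hxc hab hbc g) i j).support → u ∈ g.support := by
      intro i j he u hu
      rcases Sym2.eq_iff.mp he with ⟨h1, h2⟩ | ⟨h1, h2⟩ <;> subst h1 <;> subst h2
      · rw [P6_13] at hu
        simpa [Walk.support_reverse] using hu
      · rwa [P6_31] at hu
    have hbbeq : ∀ i j : Fin 4, s(i, j) = s((1 : Fin 4), (3 : Fin 4)) →
        ∀ u : V, u = a ∨ u = c → u = bb4 x a b c i ∨ u = bb4 x a b c j := by
      intro i j he u hu
      rcases Sym2.eq_iff.mp he with ⟨h1, h2⟩ | ⟨h1, h2⟩ <;> subst h1 <;> subst h2 <;>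
        simp only [bb4_1, bb4_3] <;> tauto
    have hmem4 : ∀ (k : Fin 4) (u : V), u = bb4 x a b c k →
        u = x ∨ u = a ∨ u = b ∨ u = c := by
      intro k u h
      fin_cases k <;> simp at h <;> tauto
    intro i j k l hij hkl hs u h1 h2
    by_cases e1 : s(i, j) = s((1 : Fin 4), (3 : Fin 4))
    · have e2 : s(k, l) ≠ s((1 : Fin 4), (3 : Fin 4)) := fun h => hs (e1.trans h.symm)
      have hb2 := hsupE k l e2 u h2
      have hu4 : u = x ∨ u = a ∨ u = b ∨ u = c := by
        rcases hb2 with h | h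
        · exact hmem4 k u h
        · exact hmem4 l u h
      exact ⟨hbbeq i j e1 u (hg4 u (hmemg i j e1 u h1) hu4), hb2⟩
    · by_cases e2 : s(k, l) = s((1 : Fin 4), (3 : Fin 4))
      · have hb1 := hsupE i j e1 u h1
        have hu4 : u = x ∨ u = a ∨ u = b ∨ u = c := by
          rcases hb1 with h | h
          · exact hmem4 i u h
          · exact hmem4 j u h
        exact ⟨hb1, hbbeq k l e2 u (hg4 u (hmemg k l e2 u h2) hu4)⟩
      · exact ⟨hsupE i j e1 u h1, hsupE k l e2 u h2⟩
  · -- vertex coverage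
    intro u
    rcases hcov u with h | h | h
    · exact ⟨0, 1, by decide, by rw [P6_01]; simp [h]⟩
    · exact ⟨1, 2, by decide, by rw [P6_12]; simp [h]⟩
    · exact ⟨3, 1, by decide, by rwa [P6_31]⟩
  · -- edge coverage
    intro e he
    rcases hecov e he with h | h | h | h | h | h
    · exact ⟨0, 1, by decide, by rw [P6_01]; simp [h]⟩
    · exact ⟨0, 2, by decide, by rw [P6_02]; simp [h]⟩
    · exact ⟨0, 3, by decide, by rw [P6_03]; simp [h]⟩
    · exact ⟨1, 2, by decide, by rw [P6_12]; simp [h]⟩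
    · exact ⟨2, 3, by decide, by rw [P6_23]; simp [h]⟩
    · exact ⟨3, 1, by decide, by rwa [P6_31]⟩

end TOK4Aux

open TOK4Aux in
theorem stmt_17 {V : Type*} [Fintype V] (G : SimpleGraph V) (x v : V)
    (w : G.Walk v v) (hcyc : w.IsCycle) (hodd : Odd w.length)
    (hcov : ∀ u : V, u ≠ x → u ∈ w.support) (hx : x ∉ w.support)
    (hdeg : (G.neighborSet x).ncard = 3)
    (i : ℕ) (hi : i + 2 < w.length)
    (hN : G.neighborSet x = {w.getVert i, w.getVert (i + 1), w.getVert (i + 2)})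
    (hE : ∀ e ∈ G.edgeSet, e ∈ w.edges ∨ ∃ u : V, e = s(x, u)) :
    IsTOK4 G := by
  classical
  have h3 : 3 ≤ w.length := by omega
  -- getVert injectivity on [1, length]
  have htail : w.support.tail = (List.range w.length).map (fun k => w.getVert (k + 1)) := by
    rw [support_eq_map, List.range_succ_eq_map, List.map_cons, List.tail_cons, List.map_map]
    rfl
  have hinj : ∀ p q : ℕ, 1 ≤ p → p ≤ w.length → 1 ≤ q → q ≤ w.length →
      w.getVert p = w.getVert q → p = q := by
    intro p q hp1 hp2 hq1 hq2 heq
    have hnd := hcyc.support_nodup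
    rw [htail] at hnd
    have := List.inj_on_of_nodup_map hnd
      (List.mem_range.mpr (show p - 1 < w.length by omega))
      (List.mem_range.mpr (show q - 1 < w.length by omega))
      (by rw [show p - 1 + 1 = p by omega, show q - 1 + 1 = q by omega]; exact heq)
    omega
  have hmemW : ∀ k : ℕ, k ≤ w.length → w.getVert k ∈ w.support := fun k hk =>
    Walk.mem_support_iff_exists_getVert.mpr ⟨k, rfl, hk⟩
  -- adjacency
  have hxA : G.Adj x (w.getVert i) := by
    have : w.getVert i ∈ G.neighborSet x := by rw [hN]; simp
    exact this
  have hxB : G.Adj x (w.getVert (i + 1)) := by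
    have : w.getVert (i + 1) ∈ G.neighborSet x := by rw [hN]; simp
    exact this
  have hxC : G.Adj x (w.getVert (i + 2)) := by
    have : w.getVert (i + 2) ∈ G.neighborSet x := by rw [hN]; simp
    exact this
  have hadjAB : G.Adj (w.getVert i) (w.getVert (i + 1)) := w.adj_getVert_succ (by omega)
  have hadjBC : G.Adj (w.getVert (i + 1)) (w.getVert (i + 2)) := by
    have := w.adj_getVert_succ (show i + 1 < w.length by omega)
    exact this
  -- distinctness from degree
  have hdeg' : ({w.getVert i, w.getVert (i + 1), w.getVert (i + 2)} : Set V).ncard = 3 := by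
    rw [← hN]; exact hdeg
  have hcard3 : ∀ p q r : V, ({p, q, r} : Set V).ncard = 3 → p ≠ q ∧ p ≠ r ∧ q ≠ r := by
    intro p q r h
    have hle : ∀ s t : V, ({s, t} : Set V).ncard ≤ 2 := by
      intro s t
      have h1 := Set.ncard_insert_le s ({t} : Set V)
      simpa using h1
    refine ⟨?_, ?_, ?_⟩ <;> intro he
    · rw [he, Set.insert_idem] at h
      have := hle q r; omega
    · rw [he, Set.insert_comm, Set.insert_eq_self.mpr (Set.mem_singleton r)] at h
      have := hle q r; omega
    · rw [he, Set.insert_eq_self.mpr (Set.mem_singleton r)] at h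
      have := hle p r; omega
  obtain ⟨nAB, nAC, nBC⟩ := hcard3 _ _ _ hdeg'
  have nxA : x ≠ w.getVert i := fun h => hx (h ▸ hmemW i (by omega))
  have nxB : x ≠ w.getVert (i + 1) := fun h => hx (h ▸ hmemW (i + 1) (by omega))
  have nxC : x ≠ w.getVert (i + 2) := fun h => hx (h ▸ hmemW (i + 2) (by omega))
  -- the long path
  set L : G.Walk (w.getVert (i + 2)) (w.getVert i) :=
    (w.drop (i + 2)).append (wtake w i) with hLdef
  have hd1 : (w.drop (i + 2)).support =
      (List.range (w.length - (i + 2) + 1)).map (fun k => w.getVert (i + 2 + k)) := by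
    rw [support_eq_map, length_drop]
    exact List.map_congr_left fun k _ => getVert_drop w (i + 2) k
  have hd2 : (wtake w i).support = (List.range (i + 1)).map w.getVert := by
    rw [support_eq_map, length_wtake w i (by omega)]
    exact List.map_congr_left fun k hk =>
      getVert_wtake w i k (by have := List.mem_range.mp hk; omega)
  have hd2t : (wtake w i).support.tail = (List.range i).map (fun k => w.getVert (k + 1)) := by
    rw [hd2, List.range_succ_eq_map, List.map_cons, List.tail_cons, List.map_map]
    rfl
  have hLsup : L.support =
      (List.range (w.length - (i + 2) + 1)).map (fun k => w.getVert (i + 2 + k)) ++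
      (List.range i).map (fun k => w.getVert (k + 1)) := by
    rw [hLdef, Walk.support_append, hd1, hd2t]
  have hLmem : ∀ u : V, u ∈ L.support →
      ∃ k : ℕ, 1 ≤ k ∧ k ≤ w.length ∧ u = w.getVert k := by
    intro u hu
    rw [hLsup] at hu
    simp only [List.mem_append, List.mem_map, List.mem_range] at hu
    rcases hu with ⟨k, hk, hku⟩ | ⟨k, hk, hku⟩
    · exact ⟨i + 2 + k, by omega, by omega, hku.symm⟩
    · exact ⟨k + 1, by omega, by omega, hku.symm⟩
  have hLx : x ∉ L.support := by
    intro h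
    obtain ⟨k, _, hk2, hk3⟩ := hLmem x h
    exact hx (hk3 ▸ hmemW k hk2)
  have hLB : w.getVert (i + 1) ∉ L.support := by
    intro h
    rw [hLsup] at h
    simp only [List.mem_append, List.mem_map, List.mem_range] at h
    rcases h with ⟨k, hk, hku⟩ | ⟨k, hk, hku⟩
    · have := hinj (i + 1) (i + 2 + k) (by omega) (by omega) (by omega) (by omega) hku.symm
      omega
    · have := hinj (i + 1) (k + 1) (by omega) (by omega) (by omega) (by omega) hku.symm
      omega
  have hLpath : L.IsPath := by
    rw [Walk.isPath_def, hLsup]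
    refine List.Nodup.append ?_ ?_ ?_
    · refine List.Nodup.map_on ?_ List.nodup_range
      intro p hp q hq heq
      have hp' := List.mem_range.mp hp
      have hq' := List.mem_range.mp hq
      have := hinj (i + 2 + p) (i + 2 + q) (by omega) (by omega) (by omega) (by omega) heq
      omega
    · refine List.Nodup.map_on ?_ List.nodup_range
      intro p hp q hq heq
      have hp' := List.mem_range.mp hp
      have hq' := List.mem_range.mp hq
      have := hinj (p + 1) (q + 1) (by omega) (by omega) (by omega) (by omega) heq
      omega
    · intro t h1 h2
      simp only [List.mem_map, List.mem_range] at h1 h2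
      obtain ⟨p, hp, hpe⟩ := h1
      obtain ⟨q, hq, hqe⟩ := h2
      have := hinj (i + 2 + p) (q + 1) (by omega) (by omega) (by omega) (by omega)
        (hpe.trans hqe.symm)
      omega
  have hLodd : Odd L.length := by
    have hlen : L.length = w.length - 2 := by
      rw [hLdef, Walk.length_append, length_drop, length_wtake w i (by omega)]
      omega
    rw [Nat.odd_iff] at hodd ⊢
    omega
  -- vertex coverage
  have hvcov : ∀ u : V, u = x ∨ u = w.getVert (i + 1) ∨ u ∈ L.support := by
    intro u
    by_cases hux : u = x
    · exact Or.inl hux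
    obtain ⟨k, hk, hkle⟩ := Walk.mem_support_iff_exists_getVert.mp (hcov u hux)
    by_cases hki : k = i + 1
    · exact Or.inr (Or.inl (by rw [← hk, hki]))
    refine Or.inr (Or.inr ?_)
    rw [hLsup]
    simp only [List.mem_append, List.mem_map, List.mem_range]
    rcases Nat.lt_or_ge k 1 with hk0 | hk1
    · -- k = 0 : u = v = getVert length
      left
      refine ⟨w.length - (i + 2), by omega, ?_⟩
      rw [show i + 2 + (w.length - (i + 2)) = w.length by omega, Walk.getVert_length]
      have : k = 0 := by omega
      rw [this] at hk
      rw [← hk, Walk.getVert_zero]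
    rcases Nat.lt_or_ge k (i + 1) with hklt | hkge
    · right
      exact ⟨k - 1, by omega, by rw [show k - 1 + 1 = k by omega]; exact hk⟩
    · left
      exact ⟨k - (i + 2), by omega, by rw [show i + 2 + (k - (i + 2)) = k by omega]; exact hk⟩
  -- edge coverage
  have hLedges : L.edges =
      (List.range (w.length - (i + 2))).map
        (fun k => s(w.getVert (i + 2 + k), w.getVert (i + 2 + k + 1))) ++
      (List.range i).map (fun k => s(w.getVert k, w.getVert (k + 1))) := by
    rw [hLdef, Walk.edges_append]
    congr 1
    · rw [edges_eq_map, length_drop]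
      refine List.map_congr_left fun k _ => ?_
      rw [getVert_drop, getVert_drop]
      rfl
    · rw [edges_eq_map, length_wtake w i (by omega)]
      exact List.map_congr_left fun k hk => by
        have := List.mem_range.mp hk
        rw [getVert_wtake w i k (by omega), getVert_wtake w i (k + 1) (by omega)]
  have hecov : ∀ e ∈ G.edgeSet,
      e = s(x, w.getVert i) ∨ e = s(x, w.getVert (i + 1)) ∨ e = s(x, w.getVert (i + 2)) ∨
      e = s(w.getVert i, w.getVert (i + 1)) ∨ e = s(w.getVert (i + 1), w.getVert (i + 2)) ∨
      e ∈ L.edges := by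
    intro e he
    rcases hE e he with hew | ⟨u, heu⟩
    · rw [edges_eq_map] at hew
      simp only [List.mem_map, List.mem_range] at hew
      obtain ⟨k, hk, hke⟩ := hew
      by_cases hki : k = i
      · subst hki; exact Or.inr (Or.inr (Or.inr (Or.inl hke.symm)))
      by_cases hki1 : k = i + 1
      · subst hki1; exact Or.inr (Or.inr (Or.inr (Or.inr (Or.inl hke.symm))))
      refine Or.inr (Or.inr (Or.inr (Or.inr (Or.inr ?_))))
      rw [hLedges]
      simp only [List.mem_append, List.mem_map, List.mem_range]
      rcases Nat.lt_or_ge k i with hklt | hkge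
      · right; exact ⟨k, hklt, hke⟩
      · left
        refine ⟨k - (i + 2), by omega, ?_⟩
        rw [show i + 2 + (k - (i + 2)) = k by omega]
        exact hke
    · subst heu
      have hadj : G.Adj x u := (G.mem_edgeSet).mp he
      have : u ∈ G.neighborSet x := hadj
      rw [hN] at this
      simp only [Set.mem_insert_iff, Set.mem_singleton_iff] at this
      rcases this with h | h | h <;> subst h
      · exact Or.inl rfl
      · exact Or.inr (Or.inl rfl)
      · exact Or.inr (Or.inr (Or.inl rfl))
  exact TOK4Aux.buildTOK4 hxA hxB hxC hadjAB hadjBC nAB nAC nBC nxA nxB nxC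
    L hLpath hLodd hLx hLB hvcov hecov
end
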